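/- For every K ≥ 1, N ∈ ℕ, and q ≥ 1 there exists a constant M (depending only on K, N, q) with the following property. Let X be a topological space with a K-bounded finite cover S. Let C = ⊔ᵢ Jᵢ be a compact 1-manifold with weights wᵢ > 0 satisfying Σᵢ wᵢ = 1, and let c¹ = Σᵢ wᵢ γᵢ¹ and c² = Σᵢ wᵢ γᵢ² be two normalized weighted multi-curves on X with strands γᵢ¹, γᵢ² : Jᵢ → X. Suppose that for each i, the image of γᵢ¹ is contained in the union of the elements of S^N that meet the image of γᵢ², and the image of γᵢ² is contained in the union of the elements of S^N that meet the image of γᵢ¹. Then M⁻¹ · mod_q(c², S) ≤ mod_q(c¹, S) ≤ M · mod_q(c², S). -/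

import Mathlib

open Set

noncomputable section

attribute [local instance] Classical.propDecidable

/-- The domain of a curve: a closed interval or a circle. -/
inductive CurveDomain
  | interval
  | circle

/-- The underlying topological space of a curve domain. -/
def CurveDomain.space : CurveDomain → Type
  | .interval => unitInterval
  | .circle => AddCircle (1 : ℝ)

instance (d : CurveDomain) : TopologicalSpace d.space :=
  match d with
  | .interval => inferInstanceAs (TopologicalSpace unitInterval)
  | .circle => inferInstanceAs (TopologicalSpace (AddCircle (1 : ℝ)))

/-- A curve on `X`: a continuous map from a compact connected 1-manifold
(a closed interval or a circle) to `X`. -/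
structure Curve (X : Type*) [TopologicalSpace X] where
  dom : CurveDomain
  toFun : dom.space → X
  continuous : Continuous toFun

/-- A weighted multi-curve on `X`: a finite formal sum `Σᵢ wᵢ γᵢ` of curves with positive
real weights. -/
structure WMCurve (X : Type*) [TopologicalSpace X] where
  ι : Type
  fin : Fintype ι
  w : ι → ℝ
  w_pos : ∀ i, 0 < w i
  strand : ι → Curve X

attribute [instance] WMCurve.fin

variable {X : Type*} [TopologicalSpace X] {ι : Type} [Fintype ι]

/-- The `ρ`-length of a curve with respect to the finite family `S`: the sum of `ρ` over the
members of the family meeting the image of the curve. -/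
def Curve.len (γ : Curve X) (S : ι → Set X) (ρ : ι → ℝ) : ℝ :=
  ∑ i, if (Set.range γ.toFun ∩ S i).Nonempty then ρ i else 0

/-- The `ρ`-length of a weighted multi-curve. -/
def WMCurve.len (c : WMCurve X) (S : ι → Set X) (ρ : ι → ℝ) : ℝ :=
  ∑ j, c.w j * (c.strand j).len S ρ

/-- A test metric `ρ` is admissible for a family `Γ` of weighted multi-curves if it is
nonnegative and every member of `Γ` has `ρ`-length at least 1. -/
def Admissible (Γ : Set (WMCurve X)) (S : ι → Set X) (ρ : ι → ℝ) : Prop :=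
  (∀ i, 0 ≤ ρ i) ∧ ∀ c ∈ Γ, 1 ≤ c.len S ρ

/-- The combinatorial `q`-modulus of a family of weighted multi-curves with respect to the
finite family `S`. -/
def modulus (q : ℝ) (Γ : Set (WMCurve X)) (S : ι → Set X) : ℝ :=
  sInf {V | ∃ ρ : ι → ℝ, Admissible Γ S ρ ∧ V = ∑ i, ρ i ^ q}

/-- A single (unweighted) curve, regarded as a weighted multi-curve with one strand of
weight 1. -/
def Curve.toWMC (γ : Curve X) : WMCurve X :=
  ⟨PUnit, inferInstance, fun _ => 1, fun _ => one_pos, fun _ => γ⟩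

/-- The combinatorial `q`-modulus of a family of curves. -/
def curveModulus (q : ℝ) (Γ : Set (Curve X)) (S : ι → Set X) : ℝ :=
  modulus q (Curve.toWMC '' Γ) S



/-- The union of the members of the family `T` that meet the set `E`. -/
def starNbhd {X : Type*} {ι : Type} (T : ι → Set X) (E : Set X) : Set X :=
  ⋃ j ∈ {j : ι | (T j ∩ E).Nonempty}, T j

/-- Iterated star: `iterStar S 0 = S` and `iterStar S (N+1) i` is the union of the members of
`S` meeting `iterStar S N i`. -/
def iterStar {X : Type*} {ι : Type} (S : ι → Set X) : ℕ → ι → Set X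
  | 0 => S
  | (N + 1) => fun i => starNbhd S (iterStar S N i)

/-- The cover `S^N` (so that `S^1 = S`, and `S^{N+1}` is obtained from `S^N` by taking unions of
the members of `S` meeting a given member); its members are in natural bijection with those
of `S`. -/
def coverPow {X : Type*} {ι : Type} (S : ι → Set X) (N : ℕ) : ι → Set X :=
  iterStar S (N - 1)


section FellowAux

lemma iterStar_succ' {X : Type*} {ι : Type} (S : ι → Set X) (m : ℕ) (k : ι) :
    iterStar S (m + 1) k = starNbhd S (iterStar S m k) := rfl

lemma subset_starNbhd {X : Type*} {ι : Type} {T : ι → Set X} {E : Set X} {j : ι}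
    (h : (T j ∩ E).Nonempty) : T j ⊆ starNbhd T E :=
  fun _ hz => Set.mem_biUnion h hz

lemma starNbhd_elim {X : Type*} {ι : Type} {T : ι → Set X} {E : Set X} {z : X}
    (h : z ∈ starNbhd T E) : ∃ j, z ∈ T j ∧ (T j ∩ E).Nonempty := by
  obtain ⟨j, hj, hz⟩ := Set.mem_iUnion₂.1 h
  exact ⟨j, hz, hj⟩

variable {X : Type} [TopologicalSpace X] {ι : Type} [Fintype ι] {S : ι → Set X}

lemma chainA {k j : ι} (hkj : (S k ∩ S j).Nonempty) :
    ∀ a, iterStar S a k ⊆ iterStar S (a + 1) j := by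
  intro a
  induction a with
  | zero =>
    rw [iterStar_succ']
    exact subset_starNbhd (T := S) (E := iterStar S 0 j) hkj
  | succ a ih =>
    intro z hz
    rw [iterStar_succ'] at hz
    obtain ⟨m, hzm, ⟨y, hy1, hy2⟩⟩ := starNbhd_elim hz
    rw [iterStar_succ']
    exact subset_starNbhd ⟨y, hy1, ih hy2⟩ hzm

lemma chainB (a : ℕ) :
    ∀ (b : ℕ) {k j : ι}, (S j ∩ iterStar S b k).Nonempty →
      iterStar S a k ⊆ iterStar S (a + b + 1) j := by
  intro b
  induction b with
  | zero =>
    intro k j h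
    obtain ⟨x, hx1, hx2⟩ := h
    exact chainA ⟨x, hx2, hx1⟩ a
  | succ b ih =>
    intro k j h
    obtain ⟨z, hzj, hzs⟩ := h
    rw [iterStar_succ'] at hzs
    obtain ⟨m, hzm, hm⟩ := starNbhd_elim hzs
    have h1 := ih (k := k) (j := m) hm
    have h2 := chainA (k := m) (j := j) ⟨z, hzm, hzj⟩ (a + b + 1)
    have e : a + (b + 1) + 1 = a + b + 1 + 1 := by omega
    rw [e]
    exact h1.trans h2

lemma S_nonempty_of_iterStar : ∀ (m : ℕ) {j : ι}, (iterStar S m j).Nonempty → (S j).Nonempty := by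
  intro m
  induction m with
  | zero => intro j h; exact h
  | succ m ih =>
    intro j h
    obtain ⟨z, hz⟩ := h
    rw [iterStar_succ'] at hz
    obtain ⟨l, _, ⟨y, _, hy⟩⟩ := starNbhd_elim hz
    exact ih ⟨y, hy⟩

lemma card_filter_inter_le {K : ℕ}
    (hbd : ∀ i, {j : ι | (S i ∩ S j).Nonempty}.ncard ≤ K) (l : ι) :
    (Finset.univ.filter fun i : ι => (S i ∩ S l).Nonempty).card ≤ K := by
  have h := hbd l
  have e : {j : ι | (S l ∩ S j).Nonempty}.ncard
      = (Finset.univ.filter fun i : ι => (S i ∩ S l).Nonempty).card := by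
    rw [Set.ncard_eq_toFinset_card']
    congr 1
    ext i
    simp [Set.inter_comm]
  rw [e] at h
  exact h

lemma card_star_le {K : ℕ}
    (hbd : ∀ i, {j : ι | (S i ∩ S j).Nonempty}.ncard ≤ K) :
    ∀ (m : ℕ) (j : ι),
      (Finset.univ.filter fun i : ι => (S i ∩ iterStar S m j).Nonempty).card ≤ K ^ (m + 1) := by
  intro m
  induction m with
  | zero =>
    intro j
    rw [zero_add, pow_one]
    exact card_filter_inter_le hbd j
  | succ m ih =>
    intro j
    have hsub : (Finset.univ.filter fun i : ι => (S i ∩ iterStar S (m + 1) j).Nonempty) ⊆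
        (Finset.univ.filter fun l : ι => (S l ∩ iterStar S m j).Nonempty).biUnion
          (fun l => Finset.univ.filter fun i : ι => (S i ∩ S l).Nonempty) := by
      intro i hi
      simp only [Finset.mem_filter, Finset.mem_univ, true_and] at hi
      obtain ⟨z, hzi, hz⟩ := hi
      rw [iterStar_succ'] at hz
      obtain ⟨l, hzl, hl⟩ := starNbhd_elim hz
      simp only [Finset.mem_biUnion, Finset.mem_filter, Finset.mem_univ, true_and]
      exact ⟨l, hl, ⟨z, hzi, hzl⟩⟩
    have h2 : ∑ l ∈ (Finset.univ.filter fun l : ι => (S l ∩ iterStar S m j).Nonempty),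
        (Finset.univ.filter fun i : ι => (S i ∩ S l).Nonempty).card
        ≤ (Finset.univ.filter fun l : ι => (S l ∩ iterStar S m j).Nonempty).card * K := by
      simpa [smul_eq_mul] using
        Finset.sum_le_card_nsmul _ _ K (fun l _ => card_filter_inter_le hbd l)
    calc (Finset.univ.filter fun i : ι => (S i ∩ iterStar S (m + 1) j).Nonempty).card
        ≤ _ := Finset.card_le_card hsub
      _ ≤ _ := Finset.card_biUnion_le
      _ ≤ _ * K := h2
      _ ≤ K ^ (m + 1) * K := Nat.mul_le_mul_right K (ih j)
      _ = K ^ (m + 1 + 1) := (pow_succ K (m + 1)).symm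

lemma sum_rpow_le {α : Type*} (t : Finset α) (f : α → ℝ) (hf : ∀ i, 0 ≤ f i)
    {q : ℝ} (hq : 1 ≤ q) :
    (∑ i ∈ t, f i) ^ q ≤ (t.card : ℝ) ^ q * ∑ i ∈ t, f i ^ q := by
  have hq0 : q ≠ 0 := by intro h; rw [h] at hq; linarith
  rcases t.eq_empty_or_nonempty with rfl | ht
  · simp [Real.zero_rpow hq0]
  · have hsum_nonneg : 0 ≤ ∑ i ∈ t, f i ^ q :=
      Finset.sum_nonneg fun i _ => Real.rpow_nonneg (hf i) q
    set m : ℝ := (∑ i ∈ t, f i ^ q) ^ q⁻¹ with hm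
    have hm0 : 0 ≤ m := Real.rpow_nonneg hsum_nonneg _
    have hfm : ∀ i ∈ t, f i ≤ m := by
      intro i hi
      have h1 : f i ^ q ≤ ∑ i ∈ t, f i ^ q :=
        Finset.single_le_sum (fun i _ => Real.rpow_nonneg (hf i) q) hi
      have h2 := Real.rpow_le_rpow (z := q⁻¹) (Real.rpow_nonneg (hf i) q) h1 (by positivity)
      rwa [Real.rpow_rpow_inv (hf i) hq0] at h2
    have h2 : ∑ i ∈ t, f i ≤ (t.card : ℝ) * m := by
      simpa [nsmul_eq_mul] using Finset.sum_le_card_nsmul t f m hfm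
    have h3 := Real.rpow_le_rpow (z := q) (Finset.sum_nonneg fun i _ => hf i) h2 (by linarith)
    rwa [Real.mul_rpow (by positivity) hm0, hm, Real.rpow_inv_rpow hsum_nonneg hq0] at h3

lemma sum_biUnion_le_real {α β : Type*} [DecidableEq β] (s : Finset α) (t : α → Finset β)
    (f : β → ℝ) (hf : ∀ b, 0 ≤ f b) :
    ∑ b ∈ s.biUnion t, f b ≤ ∑ a ∈ s, ∑ b ∈ t a, f b := by
  classical
  induction s using Finset.induction_on with
  | empty => simp
  | insert a s ha ih =>
    rw [Finset.biUnion_insert, Finset.sum_insert ha]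
    have hu : ∑ b ∈ t a ∪ s.biUnion t, f b ≤ ∑ b ∈ t a, f b + ∑ b ∈ s.biUnion t, f b := by
      have h := Finset.sum_union_inter (s₁ := t a) (s₂ := s.biUnion t) (f := f)
      have h2 : 0 ≤ ∑ b ∈ (t a ∩ s.biUnion t), f b := Finset.sum_nonneg fun b _ => hf b
      linarith
    linarith [ih]

instance (d : CurveDomain) : Nonempty d.space :=
  match d with
  | .interval => (⟨0⟩ : Nonempty unitInterval)
  | .circle => (⟨0⟩ : Nonempty (AddCircle (1 : ℝ)))

lemma modulus_le_volume {q : ℝ} {c : WMCurve X} (ρ : ι → ℝ) (h : Admissible {c} S ρ) :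
    modulus q {c} S ≤ ∑ i, ρ i ^ q := by
  apply csInf_le
  · refine ⟨0, ?_⟩
    rintro V ⟨ρ₂, h₂, rfl⟩
    exact Finset.sum_nonneg fun i _ => Real.rpow_nonneg (h₂.1 i) q
  · exact ⟨ρ, h, rfl⟩

lemma modulus_star_le (K N : ℕ) (hK : 1 ≤ K) (q : ℝ) (hq : 1 ≤ q)
    (X : Type) [TopologicalSpace X] (ι : Type) [Fintype ι]
    (S : ι → Set X) (hcov : (⋃ i, S i) = Set.univ)
    (hbd : ∀ i, {j : ι | (S i ∩ S j).Nonempty}.ncard ≤ K)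
    (σ : Type) [Fintype σ] (w : σ → ℝ) (hw : ∀ s, 0 < w s) (hw1 : (∑ s, w s) = 1)
    (dom : σ → CurveDomain) (γ₁ γ₂ : ∀ s, (dom s).space → X)
    (h₁ : ∀ s, Continuous (γ₁ s)) (h₂ : ∀ s, Continuous (γ₂ s))
    (h12 : ∀ s, Set.range (γ₁ s) ⊆ starNbhd (coverPow S N) (Set.range (γ₂ s))) :
    modulus q {(⟨σ, inferInstance, w, hw, fun s => ⟨dom s, γ₂ s, h₂ s⟩⟩ : WMCurve X)} S ≤
      (((K : ℝ) ^ (2 * (N - 1) + 3)) ^ q * (K : ℝ) ^ (2 * (N - 1) + 3)) *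
        modulus q {(⟨σ, inferInstance, w, hw, fun s => ⟨dom s, γ₁ s, h₁ s⟩⟩ : WMCurve X)} S := by
  classical
  set c1 : WMCurve X := ⟨σ, inferInstance, w, hw, fun s => ⟨dom s, γ₁ s, h₁ s⟩⟩ with hc1
  set c2 : WMCurve X := ⟨σ, inferInstance, w, hw, fun s => ⟨dom s, γ₂ s, h₂ s⟩⟩ with hc2
  set m0 : ℕ := 2 * (N - 1) + 1 with hm0d
  set D : ℝ := (K : ℝ) ^ (m0 + 2) with hDdef
  have hexp : 2 * (N - 1) + 3 = m0 + 2 := by omega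
  have hK1 : (1 : ℝ) ≤ (K : ℝ) := by exact_mod_cast hK
  have hD0 : 0 < D := by positivity
  have hD1 : (1 : ℝ) ≤ D := one_le_pow₀ hK1
  have hM0 : 0 < D ^ q * D := by positivity
  -- nonemptiness of the admissible volume set for c1
  have hA1ne : {V | ∃ ρ : ι → ℝ, Admissible {c1} S ρ ∧ V = ∑ i, ρ i ^ q}.Nonempty := by
    refine ⟨∑ i : ι, (1 : ℝ) ^ q, fun _ => 1, ⟨fun _ => zero_le_one, ?_⟩, rfl⟩
    rintro c hc
    rw [Set.mem_singleton_iff] at hc; subst hc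
    have hlen : ∀ s : σ,
        (1 : ℝ) ≤ Curve.len (⟨dom s, γ₁ s, h₁ s⟩ : Curve X) S (fun _ => 1) := by
      intro s
      obtain ⟨x⟩ : Nonempty (dom s).space := inferInstance
      have hx : γ₁ s x ∈ ⋃ i, S i := by rw [hcov]; trivial
      obtain ⟨i0, hi0⟩ := Set.mem_iUnion.1 hx
      have hne : (Set.range (γ₁ s) ∩ S i0).Nonempty := ⟨γ₁ s x, ⟨x, rfl⟩, hi0⟩
      unfold Curve.len
      calc (1 : ℝ)
          = if (Set.range ((⟨dom s, γ₁ s, h₁ s⟩ : Curve X)).toFun ∩ S i0).Nonempty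
              then (1 : ℝ) else 0 := by simp [hne]
        _ ≤ _ := Finset.single_le_sum
              (f := fun i => if (Set.range ((⟨dom s, γ₁ s, h₁ s⟩ : Curve X)).toFun ∩ S i).Nonempty
                then (1 : ℝ) else 0)
              (fun i _ => by dsimp only; split <;> norm_num) (Finset.mem_univ i0)
    show (1 : ℝ) ≤ c1.len S (fun _ => 1)
    unfold WMCurve.len
    calc (1 : ℝ) = ∑ s, w s := hw1.symm
      _ ≤ _ := Finset.sum_le_sum fun s _ => le_mul_of_one_le_right (hw s).le (hlen s)
  -- key estimate
  have key : ∀ ρ : ι → ℝ, Admissible {c1} S ρ →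
      modulus q {c2} S ≤ (D ^ q * D) * ∑ i, ρ i ^ q := by
    intro ρ hρ
    set B : ι → Finset ι :=
      fun j => Finset.univ.filter fun i => (S i ∩ iterStar S m0 j).Nonempty with hB
    set ρ' : ι → ℝ := fun j => ∑ i ∈ B j, ρ i with hρ'def
    have hρ'0 : ∀ j, 0 ≤ ρ' j := fun j => Finset.sum_nonneg fun i _ => hρ.1 i
    -- per-strand length comparison
    have hstr : ∀ s : σ,
        Curve.len (⟨dom s, γ₁ s, h₁ s⟩ : Curve X) S ρ ≤
          Curve.len (⟨dom s, γ₂ s, h₂ s⟩ : Curve X) S ρ' := by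
      intro s
      set T : Finset ι := Finset.univ.filter fun i => (Set.range (γ₁ s) ∩ S i).Nonempty with hT
      set U : Finset ι := Finset.univ.filter fun j => (Set.range (γ₂ s) ∩ S j).Nonempty with hU
      have hTU : T ⊆ U.biUnion B := by
        intro i hi
        simp only [hT, Finset.mem_filter, Finset.mem_univ, true_and] at hi
        obtain ⟨x, hxγ, hxi⟩ := hi
        obtain ⟨k, hxk, hk⟩ := starNbhd_elim (h12 s hxγ)
        obtain ⟨y, hy1, hy2⟩ := hk
        have hyU : y ∈ ⋃ i, S i := by rw [hcov]; trivial
        obtain ⟨j, hyj⟩ := Set.mem_iUnion.1 hyU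
        have hjU : j ∈ U := by
          simp only [hU, Finset.mem_filter, Finset.mem_univ, true_and]
          exact ⟨y, hy2, hyj⟩
        have hcp : coverPow S N = iterStar S (N - 1) := rfl
        rw [hcp] at hxk hy1
        have hchain : iterStar S (N - 1) k ⊆ iterStar S ((N - 1) + (N - 1) + 1) j :=
          chainB (N - 1) (N - 1) ⟨y, hyj, hy1⟩
        have hx' : x ∈ iterStar S m0 j := by
          have hmem := hchain hxk
          have e : (N - 1) + (N - 1) + 1 = m0 := by omega
          rwa [e] at hmem
        refine Finset.mem_biUnion.2 ⟨j, hjU, ?_⟩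
        simp only [hB, Finset.mem_filter, Finset.mem_univ, true_and]
        exact ⟨x, hxi, hx'⟩
      have e1 : Curve.len (⟨dom s, γ₁ s, h₁ s⟩ : Curve X) S ρ = ∑ i ∈ T, ρ i := by
        rw [hT, Finset.sum_filter]
        rfl
      have e2 : Curve.len (⟨dom s, γ₂ s, h₂ s⟩ : Curve X) S ρ' = ∑ j ∈ U, ρ' j := by
        rw [hU, Finset.sum_filter]
        rfl
      rw [e1, e2]
      calc ∑ i ∈ T, ρ i
          ≤ ∑ i ∈ U.biUnion B, ρ i :=
            Finset.sum_le_sum_of_subset_of_nonneg hTU (fun i _ _ => hρ.1 i)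
        _ ≤ ∑ j ∈ U, ∑ i ∈ B j, ρ i := sum_biUnion_le_real U B ρ hρ.1
        _ = ∑ j ∈ U, ρ' j := rfl
    -- admissibility of ρ' for c2
    have hadm : Admissible {c2} S ρ' := by
      refine ⟨hρ'0, ?_⟩
      rintro c hc
      rw [Set.mem_singleton_iff] at hc; subst hc
      have h1 : (1 : ℝ) ≤ c1.len S ρ := hρ.2 c1 rfl
      refine le_trans h1 ?_
      show c1.len S ρ ≤ c2.len S ρ'
      unfold WMCurve.len
      exact Finset.sum_le_sum fun s _ => mul_le_mul_of_nonneg_left (hstr s) (hw s).le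
    -- cardinality bounds
    have hcard : ∀ j, ((B j).card : ℝ) ≤ D := by
      intro j
      have h1 : (B j).card ≤ K ^ (m0 + 1) := card_star_le hbd m0 j
      have h2 : ((B j).card : ℝ) ≤ ((K : ℝ)) ^ (m0 + 1) := by exact_mod_cast h1
      refine h2.trans ?_
      rw [hDdef]
      exact pow_le_pow_right₀ hK1 (by omega)
    have hdual : ∀ i, ((Finset.univ.filter fun j => i ∈ B j).card : ℝ) ≤ D := by
      intro i
      have hsub : (Finset.univ.filter fun j => i ∈ B j) ⊆
          Finset.univ.filter fun j : ι => (S j ∩ iterStar S (m0 + 1) i).Nonempty := by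
        intro j hj
        simp only [hB, Finset.mem_filter, Finset.mem_univ, true_and] at hj
        obtain ⟨z, hzi, hzit⟩ := hj
        have hSj : (S j).Nonempty := S_nonempty_of_iterStar m0 ⟨z, hzit⟩
        have hsub2 : iterStar S 0 j ⊆ iterStar S (0 + m0 + 1) i :=
          chainB 0 m0 ⟨z, hzi, hzit⟩
        obtain ⟨y, hy⟩ := hSj
        have hy2 : y ∈ iterStar S (0 + m0 + 1) i := hsub2 hy
        rw [Nat.zero_add] at hy2
        simp only [Finset.mem_filter, Finset.mem_univ, true_and]
        exact ⟨y, hy, hy2⟩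
      have h1 := (Finset.card_le_card hsub).trans (card_star_le hbd (m0 + 1) i)
      have h2 : ((Finset.univ.filter fun j => i ∈ B j).card : ℝ) ≤ ((K : ℝ)) ^ (m0 + 1 + 1) := by
        exact_mod_cast h1
      refine h2.trans ?_
      rw [hDdef]
    -- volume bound
    have hswap : ∑ j, ∑ i ∈ B j, ρ i ^ q ≤ D * ∑ i, ρ i ^ q := by
      calc ∑ j, ∑ i ∈ B j, ρ i ^ q
          = ∑ j, ∑ i, if i ∈ B j then ρ i ^ q else 0 := by
            refine Finset.sum_congr rfl fun j _ => ?_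
            rw [Finset.sum_ite_mem, Finset.univ_inter]
        _ = ∑ i, ∑ j, if i ∈ B j then ρ i ^ q else 0 := Finset.sum_comm
        _ = ∑ i, ((Finset.univ.filter fun j => i ∈ B j).card : ℝ) * ρ i ^ q := by
            refine Finset.sum_congr rfl fun i _ => ?_
            rw [← Finset.sum_filter, Finset.sum_const, nsmul_eq_mul]
        _ ≤ ∑ i, D * ρ i ^ q :=
            Finset.sum_le_sum fun i _ =>
              mul_le_mul_of_nonneg_right (hdual i) (Real.rpow_nonneg (hρ.1 i) q)
        _ = D * ∑ i, ρ i ^ q := (Finset.mul_sum _ _ _).symm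
    have hvol : ∑ j, ρ' j ^ q ≤ (D ^ q * D) * ∑ i, ρ i ^ q := by
      calc ∑ j, ρ' j ^ q
          ≤ ∑ j, ((B j).card : ℝ) ^ q * ∑ i ∈ B j, ρ i ^ q :=
            Finset.sum_le_sum fun j _ => sum_rpow_le (B j) ρ hρ.1 hq
        _ ≤ ∑ j, D ^ q * ∑ i ∈ B j, ρ i ^ q := by
            refine Finset.sum_le_sum fun j _ => ?_
            refine mul_le_mul_of_nonneg_right ?_
              (Finset.sum_nonneg fun i _ => Real.rpow_nonneg (hρ.1 i) q)
            exact Real.rpow_le_rpow (by positivity) (hcard j) (by linarith)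
        _ = D ^ q * ∑ j, ∑ i ∈ B j, ρ i ^ q := (Finset.mul_sum _ _ _).symm
        _ ≤ D ^ q * (D * ∑ i, ρ i ^ q) := by
            refine mul_le_mul_of_nonneg_left hswap ?_
            exact Real.rpow_nonneg hD0.le q
        _ = (D ^ q * D) * ∑ i, ρ i ^ q := by ring
    exact (modulus_le_volume ρ' hadm).trans hvol
  -- conclude
  have hlb : modulus q {c2} S / (D ^ q * D) ≤ modulus q {c1} S := by
    show modulus q {c2} S / (D ^ q * D) ≤
      sInf {V | ∃ ρ : ι → ℝ, Admissible {c1} S ρ ∧ V = ∑ i, ρ i ^ q}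
    apply le_csInf hA1ne
    rintro V ⟨ρ, hρa, rfl⟩
    rw [div_le_iff₀ hM0]
    calc modulus q {c2} S ≤ (D ^ q * D) * ∑ i, ρ i ^ q := key ρ hρa
      _ = (∑ i, ρ i ^ q) * (D ^ q * D) := by ring
  rw [div_le_iff₀ hM0] at hlb
  calc modulus q {c2} S ≤ modulus q {c1} S * (D ^ q * D) := hlb
    _ = D ^ q * D * modulus q {c1} S := by ring

end FellowAux

/-- Fellow travellers: for every `K ≥ 1`, `N ∈ ℕ` and `q ≥ 1` there is a
constant `M` (depending only on `K`, `N`, `q`) such that for any space `X` with a `K`-bounded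
finite cover `S`, and any two normalized weighted multi-curves `c¹`, `c²` on `X` with the same
weighted domain whose corresponding strands are contained in the `S^N`-neighborhoods of each
other, the moduli `mod_q(c¹, S)` and `mod_q(c², S)` agree up to the factor `M`. -/
theorem modulus_fellow_travellers (K : ℕ) (hK : 1 ≤ K) (N : ℕ) (q : ℝ) (hq : 1 ≤ q) :
    ∃ M : ℝ, 0 < M ∧
      ∀ (X : Type) [TopologicalSpace X] (ι : Type) [Fintype ι]
        (S : ι → Set X), (⋃ i, S i) = Set.univ →
        (∀ i, 1 ≤ {j : ι | (S i ∩ S j).Nonempty}.ncard ∧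
          {j : ι | (S i ∩ S j).Nonempty}.ncard ≤ K) →
        ∀ (σ : Type) [Fintype σ] (w : σ → ℝ) (hw : ∀ s, 0 < w s), (∑ s, w s) = 1 →
          ∀ (dom : σ → CurveDomain) (γ₁ γ₂ : ∀ s, (dom s).space → X)
            (h₁ : ∀ s, Continuous (γ₁ s)) (h₂ : ∀ s, Continuous (γ₂ s)),
            (∀ s, Set.range (γ₁ s) ⊆ starNbhd (coverPow S N) (Set.range (γ₂ s))) →
            (∀ s, Set.range (γ₂ s) ⊆ starNbhd (coverPow S N) (Set.range (γ₁ s))) →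
            M⁻¹ * modulus q {(⟨σ, inferInstance, w, hw, fun s => ⟨dom s, γ₂ s, h₂ s⟩⟩ :
                WMCurve X)} S ≤
              modulus q {(⟨σ, inferInstance, w, hw, fun s => ⟨dom s, γ₁ s, h₁ s⟩⟩ :
                WMCurve X)} S ∧
            modulus q {(⟨σ, inferInstance, w, hw, fun s => ⟨dom s, γ₁ s, h₁ s⟩⟩ :
                WMCurve X)} S ≤
              M * modulus q {(⟨σ, inferInstance, w, hw, fun s => ⟨dom s, γ₂ s, h₂ s⟩⟩ :
                WMCurve X)} S := by
  classical
  refine ⟨((K : ℝ) ^ (2 * (N - 1) + 3)) ^ q * (K : ℝ) ^ (2 * (N - 1) + 3), ?_, ?_⟩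
  · have hK1 : (1 : ℝ) ≤ (K : ℝ) := by exact_mod_cast hK
    positivity
  · intro X _ ι _ S hcov hbd σ _ w hw hw1 dom γ₁ γ₂ h₁ h₂ h12 h21
    have hK1 : (1 : ℝ) ≤ (K : ℝ) := by exact_mod_cast hK
    have hM0 : 0 < ((K : ℝ) ^ (2 * (N - 1) + 3)) ^ q * (K : ℝ) ^ (2 * (N - 1) + 3) := by
      positivity
    constructor
    · rw [inv_mul_le_iff₀ hM0]
      exact modulus_star_le K N hK q hq X ι S hcov (fun i => (hbd i).2) σ w hw hw1
        dom γ₁ γ₂ h₁ h₂ h12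
    · exact modulus_star_le K N hK q hq X ι S hcov (fun i => (hbd i).2) σ w hw hw1
        dom γ₂ γ₁ h₂ h₁ h21


end
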